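/- Let d ≥ 1 and let x_1,…,x_d be real numbers with x_i ≥ −2/3 for every i. Then exp((1/d)·Σ_{i=1}^d (x_i − x_i²)) ≤ 1 + (1/d)·Σ_{i=1}^d x_i. -/

import Mathlib

lemma key_tangent {x : ℝ} (hx : -2/3 ≤ x) : Real.exp (x - x^2) ≤ 1 + x := by
  rcases le_total 0 x with h | h
  · have hy : x - x^2 < 1 := by nlinarith [sq_nonneg (x - 1/2)]
    have h1 : 1 - (x - x^2) ≤ Real.exp (-(x - x^2)) := Real.one_sub_le_exp_neg _
    have hpos : 0 < 1 - (x - x^2) := by linarith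
    have h2 : Real.exp (x - x^2) ≤ (1 - (x - x^2))⁻¹ := by
      have : Real.exp (x - x^2) = (Real.exp (-(x - x^2)))⁻¹ := by
        rw [← Real.exp_neg]; ring_nf
      rw [this]
      exact inv_anti₀ hpos h1
    refine h2.trans ?_
    rw [inv_le_iff_one_le_mul₀ hpos]
    nlinarith [pow_nonneg h 3]
  · set t : ℝ := x^2 - x with ht
    have htnn : 0 ≤ t := by nlinarith
    have hS : ∑ i ∈ Finset.range 6, t ^ i / (Nat.factorial i) ≤ Real.exp t :=
      Real.sum_le_exp_of_nonneg htnn 6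
    have hSval : ∑ i ∈ Finset.range 6, t ^ i / (Nat.factorial i)
        = 1 + t + t^2/2 + t^3/6 + t^4/24 + t^5/120 := by
      norm_num [Finset.sum_range_succ, Nat.factorial]
    rw [hSval] at hS
    have hSpos : (0:ℝ) < 1 + t + t^2/2 + t^3/6 + t^4/24 + t^5/120 := by positivity
    have h2 : Real.exp (x - x^2) ≤ (1 + t + t^2/2 + t^3/6 + t^4/24 + t^5/120)⁻¹ := by
      have : Real.exp (x - x^2) = (Real.exp t)⁻¹ := by
        rw [← Real.exp_neg, ht]; ring_nf
      rw [this]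
      exact inv_anti₀ hSpos hS
    refine h2.trans ?_
    rw [inv_le_iff_one_le_mul₀ hSpos]
    have h23 : 0 ≤ x + 2/3 := by linarith
    rw [ht]
    nlinarith [sq_nonneg x, sq_nonneg (x+2/3), mul_nonneg h23 (sq_nonneg x), mul_nonneg (mul_nonneg h23 h23) (sq_nonneg x), mul_nonneg (mul_nonneg h23 h23) (sq_nonneg (x*x)), sq_nonneg (x*(x+2/3)), mul_nonneg h23 (sq_nonneg (x*x)), mul_nonneg h23 (sq_nonneg (x*x*x)), mul_nonneg h23 (sq_nonneg (x*x*x*x)), mul_nonneg h23 (sq_nonneg (x*x*(x+2/3)))]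

/-- Diagonal-case tangent bound: for `d ≥ 1` and reals `x₁,…,x_d` with `x_i ≥ -2/3`,
`exp((1/d)·Σ (x_i - x_i²)) ≤ 1 + (1/d)·Σ x_i`. -/
theorem stmt_7 (d : ℕ) (hd : 1 ≤ d) (x : Fin d → ℝ) (hx : ∀ i, -2/3 ≤ x i) :
    Real.exp ((1 / (d : ℝ)) * ∑ i, (x i - (x i) ^ 2)) ≤ 1 + (1 / (d : ℝ)) * ∑ i, x i := by
  have hd0 : (0:ℝ) < d := by exact_mod_cast hd
  have hw0 : ∀ i ∈ (Finset.univ : Finset (Fin d)), (0:ℝ) ≤ 1 / (d:ℝ) := fun _ _ => by positivity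
  have hw1 : ∑ _i : Fin d, (1 / (d:ℝ)) = 1 := by
    simp [Finset.sum_const, Finset.card_univ]
    field_simp
  have hmem : ∀ i ∈ (Finset.univ : Finset (Fin d)), (x i - (x i)^2) ∈ (Set.univ : Set ℝ) :=
    fun _ _ => Set.mem_univ _
  have jensen := convexOn_exp.map_sum_le hw0 hw1 hmem
  have h1 : Real.exp ((1 / (d : ℝ)) * ∑ i, (x i - (x i) ^ 2))
      ≤ ∑ i, (1 / (d:ℝ)) * Real.exp (x i - (x i)^2) := by
    have : (1 / (d : ℝ)) * ∑ i, (x i - (x i) ^ 2)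
        = ∑ i : Fin d, (1 / (d:ℝ)) • (x i - (x i)^2) := by
      rw [Finset.mul_sum]; simp [smul_eq_mul]
    rw [this]
    simpa using jensen
  refine h1.trans ?_
  have h2 : ∑ i, (1 / (d:ℝ)) * Real.exp (x i - (x i)^2)
      ≤ ∑ i, (1 / (d:ℝ)) * (1 + x i) := by
    apply Finset.sum_le_sum
    intro i _
    exact mul_le_mul_of_nonneg_left (key_tangent (hx i)) (by positivity)
  refine h2.trans (le_of_eq ?_)
  have h3 : ∑ i : Fin d, 1/(d:ℝ) * (1 + x i) = ∑ i : Fin d, (1/(d:ℝ) + 1/(d:ℝ) * x i) :=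
    Finset.sum_congr rfl (fun i _ => by ring)
  rw [h3, Finset.sum_add_distrib, Finset.mul_sum]
  simp [Finset.sum_const, Finset.card_univ]
  field_simp
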